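/- Let A be a p-dimensional hypermatrix with rational entries in [0,1] having mystery-value α with stochastic mystery-vectors. Then by replacing each entry w of A (which is rational, hence 2-cooperative) with a suitable Kronecker-product block built from {0,1}-hypermatrices, one obtains a {0,1}-hypermatrix A′ that has α as a mystery-value with stochastic mystery-vectors. Concretely, for p = 2: if A is an m×n matrix with rational entries in [0,1], each with a {0,1}-matrix realization, then there is a {0,1}-matrix A′ and stochastic vectors β₁′, β₂′ with A′(x, β₂′) = α·J(x) for all x and A′(β₁′, y) = α·J(y) for all y. -/

import Mathlib

open Matrix BigOperators

lemma ratCast_mulVec {R S : Type*} [Fintype S] (M : Matrix R S ℚ) (y : S → ℚ) (i : R) :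
    ((M *ᵥ y) i : ℝ) = ((M.map (Rat.cast : ℚ → ℝ)) *ᵥ fun j => ((y j : ℝ))) i := by
  simp [Matrix.mulVec, dotProduct, Matrix.map_apply]

lemma exists_rat_solution {R S : Type*} [Fintype R] [Fintype S] [DecidableEq R] [DecidableEq S]
    (M : Matrix R S ℚ) (v : R → ℚ) (x : S → ℝ)
    (hx : (M.map (Rat.cast : ℚ → ℝ)) *ᵥ x = fun i => (v i : ℝ)) :
    ∃ y : S → ℚ, M *ᵥ y = v := by
  have hle : LinearMap.range (Mᵀ * M).mulVecLin ≤ LinearMap.range Mᵀ.mulVecLin := by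
    rintro _ ⟨z, rfl⟩
    exact ⟨M *ᵥ z, by simp [Matrix.mulVecLin_apply, Matrix.mulVec_mulVec]⟩
  have hrk : (Mᵀ * M).rank = Mᵀ.rank := by
    rw [Matrix.rank_transpose_mul_self, Matrix.rank_transpose]
  have hrange : LinearMap.range (Mᵀ * M).mulVecLin = LinearMap.range Mᵀ.mulVecLin :=
    Submodule.eq_of_le_of_finrank_eq hle (by simpa [Matrix.rank] using hrk)
  have hmem : Mᵀ *ᵥ v ∈ LinearMap.range (Mᵀ * M).mulVecLin := by
    rw [hrange]; exact ⟨v, rfl⟩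
  obtain ⟨y, hy⟩ := hmem
  simp only [Matrix.mulVecLin_apply, ← Matrix.mulVec_mulVec] at hy
  refine ⟨y, ?_⟩
  set d : R → ℚ := M *ᵥ y - v with hddef
  have hd : Mᵀ *ᵥ d = 0 := by
    rw [hddef, Matrix.mulVec_sub, hy, sub_self]
  set dr : R → ℝ := fun i => (d i : ℝ) with hdrdef
  have hdr : dr = (M.map (Rat.cast : ℚ → ℝ)) *ᵥ ((fun j => ((y j : ℝ))) - x) := by
    funext i
    rw [Matrix.mulVec_sub]
    have h1 : dr i = ((M.map (Rat.cast : ℚ → ℝ)) *ᵥ fun j => ((y j : ℝ))) i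
        - ((M.map (Rat.cast : ℚ → ℝ)) *ᵥ x) i := by
      rw [hx]
      simp only [hdrdef, hddef, Pi.sub_apply, Rat.cast_sub, ratCast_mulVec]
    simpa using h1
  have hzero : (M.map (Rat.cast : ℚ → ℝ))ᵀ *ᵥ dr = 0 := by
    funext i
    have : ((Mᵀ *ᵥ d) i : ℝ) = 0 := by rw [hd]; simp
    rw [ratCast_mulVec] at this
    simpa [Matrix.transpose_map] using this
  have hdot : dr ⬝ᵥ dr = 0 := by
    nth_rewrite 2 [hdr]
    rw [Matrix.dotProduct_mulVec, ← Matrix.mulVec_transpose, hzero]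
    exact zero_dotProduct _
  have : dr = 0 := dotProduct_self_eq_zero.mp hdot
  have hd0 : d = 0 := by
    funext i
    have h' : ((d i : ℝ)) = 0 := congrFun this i
    exact_mod_cast h'
  rw [hddef] at hd0
  exact sub_eq_zero.mp hd0

/-- p = 2 case of the substitution lemma: if an `m × n` matrix with
rational entries in `[0,1]`, each of which is the mystery-value of some `{0,1}`-matrix
with stochastic mystery-vectors, itself has mystery-value `α` with stochastic
mystery-vectors, then `α` is the mystery-value of a `{0,1}`-matrix with stochastic
mystery-vectors. -/
theorem robust_coin_flipping_stmt14
    {m n : ℕ} (A : Matrix (Fin m) (Fin n) ℚ)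
    (hA01 : ∀ i j, A i j ∈ Set.Icc (0 : ℚ) 1)
    (hAcoop : ∀ i j,
      ∃ (m' n' : ℕ) (B : Matrix (Fin m') (Fin n') ℝ)
        (γ₁ : Fin m' → ℝ) (γ₂ : Fin n' → ℝ),
        (∀ a b, B a b = 0 ∨ B a b = 1) ∧
        (∀ a, 0 ≤ γ₁ a) ∧ (∑ a, γ₁ a = 1) ∧
        (∀ b, 0 ≤ γ₂ b) ∧ (∑ b, γ₂ b = 1) ∧
        (∀ x : Fin m' → ℝ, x ⬝ᵥ B.mulVec γ₂ = (A i j : ℝ) * ∑ a, x a) ∧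
        (∀ y : Fin n' → ℝ, γ₁ ⬝ᵥ B.mulVec y = (A i j : ℝ) * ∑ b, y b))
    (α : ℝ) (β₁ : Fin m → ℝ) (β₂ : Fin n → ℝ)
    (hβ₁0 : ∀ i, 0 ≤ β₁ i) (hβ₁ : ∑ i, β₁ i = 1)
    (hβ₂0 : ∀ j, 0 ≤ β₂ j) (hβ₂ : ∑ j, β₂ j = 1)
    (h1 : ∀ x : Fin m → ℝ,
      x ⬝ᵥ (A.map (Rat.cast : ℚ → ℝ)).mulVec β₂ = α * ∑ i, x i)
    (h2 : ∀ y : Fin n → ℝ,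
      β₁ ⬝ᵥ (A.map (Rat.cast : ℚ → ℝ)).mulVec y = α * ∑ j, y j) :
    ∃ (m' n' : ℕ) (A' : Matrix (Fin m') (Fin n') ℝ)
      (β₁' : Fin m' → ℝ) (β₂' : Fin n' → ℝ),
      (∀ a b, A' a b = 0 ∨ A' a b = 1) ∧
      (∀ a, 0 ≤ β₁' a) ∧ (∑ a, β₁' a = 1) ∧
      (∀ b, 0 ≤ β₂' b) ∧ (∑ b, β₂' b = 1) ∧
      (∀ x : Fin m' → ℝ, x ⬝ᵥ A'.mulVec β₂' = α * ∑ a, x a) ∧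
      (∀ y : Fin n' → ℝ, β₁' ⬝ᵥ A'.mulVec y = α * ∑ b, y b) := by
  classical
  -- each row of A has β₂-average α
  have hα1 : ∀ i, ∑ j, ((A i j : ℝ)) * β₂ j = α := by
    intro i
    have := h1 (Pi.single i 1)
    rw [single_dotProduct, one_mul] at this
    have hs : ∑ k, Pi.single i (1:ℝ) k = 1 := by simp
    rw [hs, mul_one] at this
    simpa [Matrix.mulVec, dotProduct, Matrix.map_apply] using this
  -- bounds on α
  have hαval : α = ∑ i, β₁ i * ∑ j, ((A i j : ℝ)) * β₂ j := by
    have := h1 β₁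
    rw [hβ₁, mul_one] at this
    rw [← this]
    simp [Matrix.mulVec, dotProduct, Matrix.map_apply]
  have hα0 : 0 ≤ α := by
    rw [hαval]
    refine Finset.sum_nonneg fun i _ => mul_nonneg (hβ₁0 i) ?_
    refine Finset.sum_nonneg fun j _ => mul_nonneg ?_ (hβ₂0 j)
    exact_mod_cast (hA01 i j).1
  have hα1' : α ≤ 1 := by
    rw [hαval]
    calc ∑ i, β₁ i * ∑ j, ((A i j : ℝ)) * β₂ j
        ≤ ∑ i, β₁ i * ∑ j, β₂ j := by
          refine Finset.sum_le_sum fun i _ => mul_le_mul_of_nonneg_left ?_ (hβ₁0 i)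
          refine Finset.sum_le_sum fun j _ => ?_
          have h01 : ((A i j : ℝ)) ≤ 1 := by exact_mod_cast (hA01 i j).2
          calc ((A i j : ℝ)) * β₂ j ≤ 1 * β₂ j :=
                mul_le_mul_of_nonneg_right h01 (hβ₂0 j)
            _ = β₂ j := one_mul _
      _ = 1 := by rw [hβ₂]; simp [hβ₁]
  -- rational solution of the row-side linear system
  obtain ⟨y, hy⟩ :=
    exists_rat_solution
      (Matrix.of (Sum.elim (fun i => Sum.elim (fun j => A i j) (fun _ => (-1:ℚ)))
                           (fun _ => Sum.elim (fun _ => (1:ℚ)) (fun _ => 0)))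
        : Matrix (Fin m ⊕ Unit) (Fin n ⊕ Unit) ℚ)
      ((Sum.elim (fun _ => (0:ℚ)) (fun _ => (1:ℚ))) : Fin m ⊕ Unit → ℚ)
      ((Sum.elim β₂ (fun _ => α)) : Fin n ⊕ Unit → ℝ)
      (by
        funext r
        cases r with
        | inl i =>
          simp only [Matrix.mulVec, dotProduct, Fintype.sum_sum_type, Matrix.map_apply,
            Matrix.of_apply, Sum.elim_inl, Sum.elim_inr, Finset.univ_unique,
            Finset.sum_singleton, Rat.cast_neg, Rat.cast_one, Rat.cast_zero]
          linarith [hα1 i]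
        | inr u =>
          simp only [Matrix.mulVec, dotProduct, Fintype.sum_sum_type, Matrix.map_apply,
            Matrix.of_apply, Sum.elim_inl, Sum.elim_inr, Finset.univ_unique,
            Finset.sum_singleton, Rat.cast_one, Rat.cast_zero]
          simp [hβ₂])
  set b : Fin n → ℚ := fun j => y (Sum.inl j) with hbdef
  set a : ℚ := y (Sum.inr ()) with hadef
  have hrow : ∀ i, ∑ j, A i j * b j = a := by
    intro i
    have := congrFun hy (Sum.inl i)
    simp only [Matrix.mulVec, dotProduct, Fintype.sum_sum_type, Matrix.of_apply,
      Sum.elim_inl, Sum.elim_inr, Finset.univ_unique, Finset.sum_singleton] at this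
    rw [hbdef, hadef]
    linarith [this]
  have hbsum : ∑ j, b j = 1 := by
    have := congrFun hy (Sum.inr ())
    simp only [Matrix.mulVec, dotProduct, Fintype.sum_sum_type, Matrix.of_apply,
      Sum.elim_inl, Sum.elim_inr, Finset.univ_unique, Finset.sum_singleton] at this
    rw [hbdef]
    simpa using this
  -- α equals the rational number a
  have hαa : α = (a : ℝ) := by
    have h2' := h2 (fun j => ((b j : ℝ)))
    have hsumb : ∑ j, ((b j : ℝ)) = 1 := by
      have : ((∑ j, b j : ℚ) : ℝ) = 1 := by rw [hbsum]; norm_num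
      push_cast at this
      exact this
    rw [hsumb, mul_one] at h2'
    have hmv : β₁ ⬝ᵥ ((A.map (Rat.cast : ℚ → ℝ)) *ᵥ fun j => ((b j : ℝ))) = (a : ℝ) := by
      have hpt : ∀ i, ((A.map (Rat.cast : ℚ → ℝ)) *ᵥ fun j => ((b j : ℝ))) i = (a : ℝ) := by
        intro i
        rw [← ratCast_mulVec]
        have : (A *ᵥ b) i = a := by
          simpa [Matrix.mulVec, dotProduct] using hrow i
        rw [this]
      simp only [dotProduct]
      calc ∑ i, β₁ i * ((A.map (Rat.cast : ℚ → ℝ)) *ᵥ fun j => ((b j : ℝ))) i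
          = ∑ i, β₁ i * (a : ℝ) := Finset.sum_congr rfl fun i _ => by rw [hpt i]
        _ = (∑ i, β₁ i) * (a : ℝ) := (Finset.sum_mul _ _ _).symm
        _ = (a : ℝ) := by rw [hβ₁, one_mul]
    rw [hmv] at h2'
    exact h2'.symm
  have ha0 : 0 ≤ a := by
    have : (0:ℝ) ≤ (a:ℝ) := hαa ▸ hα0
    exact_mod_cast this
  have ha1 : a ≤ 1 := by
    have : (a:ℝ) ≤ 1 := hαa ▸ hα1'
    exact_mod_cast this
  -- construct the {0,1} matrix
  set q : ℕ := a.den with hqdef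
  set p : ℕ := a.num.toNat with hpdef
  have hq0 : 0 < q := a.pos
  haveI : NeZero q := ⟨hq0.ne'⟩
  have hqR : ((q:ℝ)) ≠ 0 := Nat.cast_ne_zero.mpr hq0.ne'
  have hnum : ((p : ℤ)) = a.num := Int.toNat_of_nonneg (Rat.num_nonneg.mpr ha0)
  have hpcast : (p : ℚ) = a * q := by
    have hden : ((a.num : ℚ)) = a * (a.den : ℚ) := by
      have hdne : ((a.den : ℚ)) ≠ 0 := by exact_mod_cast a.den_ne_zero
      exact (div_eq_iff hdne).mp (Rat.num_div_den a)
    have : ((p:ℚ)) = ((a.num : ℚ)) := by exact_mod_cast hnum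
    rw [this, hden, hqdef]
  have hpR : ((p : ℝ)) = α * q := by
    have : ((p : ℝ)) = ((a:ℝ)) * ((q:ℝ)) := by exact_mod_cast hpcast
    rw [this, hαa]
  have hpq : p ≤ q := by
    have : (p:ℚ) ≤ (q:ℚ) := by
      rw [hpcast]
      calc a * (q:ℚ) ≤ 1 * (q:ℚ) := by
            apply mul_le_mul_of_nonneg_right ha1 (by positivity)
        _ = (q:ℚ) := one_mul _
    exact_mod_cast this
  -- counting lemmas
  have hfilter : (Finset.range q).filter (fun k => k < p) = Finset.range p := by
    ext k
    simp only [Finset.mem_filter, Finset.mem_range]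
    omega
  have hsum0 : ∑ j : Fin q, (if (j : Fin q).val < p then (1:ℝ) else 0) = p := by
    rw [Fin.sum_univ_eq_sum_range (fun k => if k < p then (1:ℝ) else 0) q]
    rw [← Finset.sum_filter, hfilter, Finset.sum_const, Finset.card_range, nsmul_eq_mul, mul_one]
  have hrowsum : ∀ i : Fin q,
      ∑ j : Fin q, (if ((i + j : Fin q)).val < p then (1:ℝ) else 0) = p := by
    intro i
    refine (Fintype.sum_equiv (Equiv.addLeft i)
      (fun j => if ((i + j : Fin q)).val < p then (1:ℝ) else 0)
      (fun j => if (j : Fin q).val < p then (1:ℝ) else 0) fun j => ?_).trans hsum0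
    simp [Equiv.coe_addLeft]
    rfl
  have hcolsum : ∀ j : Fin q,
      ∑ i : Fin q, (if ((i + j : Fin q)).val < p then (1:ℝ) else 0) = p := by
    intro j
    refine (Fintype.sum_equiv (Equiv.addRight j)
      (fun i => if ((i + j : Fin q)).val < p then (1:ℝ) else 0)
      (fun i => if (i : Fin q).val < p then (1:ℝ) else 0) fun i => ?_).trans hsum0
    simp [Equiv.coe_addRight]
    rfl
  refine ⟨q, q, Matrix.of (fun i j => if ((i + j : Fin q)).val < p then (1:ℝ) else 0),
    (fun _ => ((q:ℝ))⁻¹), (fun _ => ((q:ℝ))⁻¹), ?_, ?_, ?_, ?_, ?_, ?_, ?_⟩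
  · intro i j
    dsimp only [Matrix.of_apply]
    split_ifs
    exacts [Or.inr rfl, Or.inl rfl]
  · intro i; positivity
  · simp only [Finset.sum_const, Finset.card_univ, Fintype.card_fin, nsmul_eq_mul]
    exact mul_inv_cancel₀ hqR
  · intro j; positivity
  · simp only [Finset.sum_const, Finset.card_univ, Fintype.card_fin, nsmul_eq_mul]
    exact mul_inv_cancel₀ hqR
  · -- row side
    have hmv : (Matrix.of (fun i j => if ((i + j : Fin q)).val < p then (1:ℝ) else 0)) *ᵥ
        (fun _ => ((q:ℝ))⁻¹) = fun _ => α := by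
      funext i
      simp only [Matrix.mulVec, dotProduct, Matrix.of_apply]
      rw [← Finset.sum_mul, hrowsum i, hpR, mul_assoc, mul_inv_cancel₀ hqR, mul_one]
    intro x
    rw [hmv]
    simp only [dotProduct]
    rw [← Finset.sum_mul, mul_comm]
  · -- column side
    intro y0
    simp only [dotProduct, Matrix.mulVec, Matrix.of_apply]
    calc ∑ i : Fin q, ((q:ℝ))⁻¹ * ∑ j, (if ((i + j : Fin q)).val < p then (1:ℝ) else 0) * y0 j
        = ∑ i : Fin q, ∑ j, ((q:ℝ))⁻¹ * ((if ((i + j : Fin q)).val < p then (1:ℝ) else 0) * y0 j) := by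
          simp only [Finset.mul_sum]
      _ = ∑ j : Fin q, ∑ i, ((q:ℝ))⁻¹ * ((if ((i + j : Fin q)).val < p then (1:ℝ) else 0) * y0 j) :=
          Finset.sum_comm
      _ = ∑ j : Fin q, (((q:ℝ))⁻¹ * y0 j) *
            ∑ i, (if ((i + j : Fin q)).val < p then (1:ℝ) else 0) := by
          refine Finset.sum_congr rfl fun j _ => ?_
          rw [Finset.mul_sum]
          exact Finset.sum_congr rfl fun i _ => by ring
      _ = ∑ j : Fin q, (((q:ℝ))⁻¹ * y0 j) * (p:ℝ) := by
          refine Finset.sum_congr rfl fun j _ => ?_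
          rw [hcolsum j]
      _ = ∑ j : Fin q, α * y0 j := by
          refine Finset.sum_congr rfl fun j _ => ?_
          rw [hpR]
          field_simp
      _ = α * ∑ j, y0 j := (Finset.mul_sum _ _ _).symm
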